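/- Every unit u > 1 of a real quadratic field with norm 1 satisfies u ≥ (3+√5)/2. -/
import Mathlib

/-- Every unit `u > 1` of a real quadratic field with norm `1` (an irrational real root of
`x² - t·x + 1`, `t ∈ ℤ`) satisfies `u ≥ (3+√5)/2`. -/
theorem norm_one_unit_lower_bound (u : ℝ) (t : ℤ)
    (hmin : u ^ 2 - (t : ℝ) * u + 1 = 0) (hirr : Irrational u) (h1 : 1 < u) :
    (3 + Real.sqrt 5) / 2 ≤ u := by
  have hu0 : (0:ℝ) < u := by linarith
  have ht2 : (2:ℝ) < t := by
    have h := sq_nonneg (u - 1)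
    have hne : u - 1 ≠ 0 := by linarith
    have h' : 0 < (u - 1)^2 := by positivity
    nlinarith
  have ht3 : (3:ℤ) ≤ t := by exact_mod_cast ht2
  have ht3' : (3:ℝ) ≤ t := by exact_mod_cast ht3
  have hs : Real.sqrt 5 ^ 2 = 5 := Real.sq_sqrt (by norm_num)
  have hs0 : (0:ℝ) ≤ Real.sqrt 5 := Real.sqrt_nonneg 5
  have hq : 0 ≤ u^2 - 3*u + 1 := by nlinarith
  have hs2 : (2:ℝ) < Real.sqrt 5 := by nlinarith
  by_contra h
  push_neg at h
  have ha : 0 < 2*u - 3 + Real.sqrt 5 := by linarith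
  have hb : 0 < 3 + Real.sqrt 5 - 2*u := by linarith
  nlinarith [mul_pos ha hb]
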